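/- Let (S_m)_{m=0}^n be a positive martingale with S_0 = 1 satisfying E[(S_{m+1} − S_m)² | F_m] = (exp(c/n) − 1)·S_m² a.s., and let g : [0,∞) → [0,∞) be L-Lipschitz with g(0) = 0. Then for every M > 0, |E[g(S_n)] − E[min(g(S_n), M)]| ≤ L^{3/2}·exp(c/2)/√M. In particular E[min(g(S_n), M)] → E[g(S_n)] as M → ∞ uniformly in n. -/

import Mathlib

open MeasureTheory ProbabilityTheory Real

-- helper: product of two L² functions is integrable
lemma aux_mul_integrable {Ω : Type*} {mΩ : MeasurableSpace Ω} {μ : Measure Ω}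
    {f g : Ω → ℝ} (hf : MemLp f 2 μ) (hg : MemLp g 2 μ) :
    Integrable (fun ω => f ω * g ω) μ := by
  have h : MemLp (f • g) 1 μ := hg.smul hf
  exact memLp_one_iff_integrable.mp h

theorem stmt3 {Ω : Type*} {mΩ : MeasurableSpace Ω} (μ : Measure Ω) [IsProbabilityMeasure μ]
    (n : ℕ) (hn : 0 < n) (c : ℝ) (hc : 0 < c)
    (ℱ : Filtration ℕ mΩ) (S : ℕ → Ω → ℝ)
    (hmart : Martingale S ℱ μ)
    (hS0 : ∀ ω, S 0 ω = 1)
    (hpos : ∀ m, ∀ᵐ ω ∂μ, 0 < S m ω)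
    (hvar : ∀ m < n, μ[fun ω => (S (m+1) ω - S m ω)^2 | ℱ m]
        =ᵐ[μ] fun ω => (Real.exp (c / n) - 1) * (S m ω)^2)
    (L : ℝ) (hL : 0 < L) (g : ℝ → ℝ)
    (hg0 : g 0 = 0) (hgnn : ∀ x ≥ (0:ℝ), 0 ≤ g x)
    (hglip : LipschitzOnWith (Real.toNNReal L) g (Set.Ici 0)) :
    ∀ M > (0:ℝ), |(∫ ω, g (S n ω) ∂μ) - ∫ ω, min (g (S n ω)) M ∂μ|
      ≤ L ^ ((3:ℝ)/2) * Real.exp (c/2) / Real.sqrt M := by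
  intro M hM
  -- basic facts
  have hexp1 : 1 < Real.exp (c / n) := by
    rw [Real.one_lt_exp_iff]
    exact div_pos hc (Nat.cast_pos.mpr hn)
  -- Step A : increments squared are integrable
  have hΔint : ∀ m < n, Integrable (fun ω => (S (m+1) ω - S m ω)^2) μ := by
    intro m hm
    by_contra hni
    have h0 : μ[fun ω => (S (m+1) ω - S m ω)^2 | ℱ m] = 0 := condExp_of_not_integrable hni
    have h1 : (0 : Ω → ℝ) =ᵐ[μ] fun ω => (Real.exp (c / n) - 1) * (S m ω)^2 :=
      h0 ▸ hvar m hm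
    obtain ⟨ω, hω1, hω2⟩ := (h1.and (hpos m)).exists
    have : (0:ℝ) < (Real.exp (c / n) - 1) * (S m ω)^2 :=
      mul_pos (sub_pos.mpr hexp1) (pow_pos hω2 2)
    simp only [Pi.zero_apply] at hω1
    linarith [hω1 ▸ this]
  -- Step B : S m ∈ L²
  have hmem : ∀ m, m ≤ n → MemLp (S m) 2 μ := by
    intro m
    induction m with
    | zero =>
      intro _
      have : S 0 = fun _ : Ω => (1:ℝ) := funext hS0
      rw [this]; exact memLp_const 1
    | succ k ih =>
      intro hk
      have hkn : k < n := hk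
      have hΔ : MemLp (fun ω => S (k+1) ω - S k ω) 2 μ :=
        (memLp_two_iff_integrable_sq
          ((hmart.integrable (k+1)).aestronglyMeasurable.sub
            (hmart.integrable k).aestronglyMeasurable)).mpr (hΔint k hkn)
      have : S (k+1) = fun ω => (S (k+1) ω - S k ω) + S k ω := by ext ω; ring
      rw [this]
      exact hΔ.add (ih hkn.le)
  -- Step C+D : second moment bound
  have hstep : ∀ m < n, ∫ ω, (S (m+1) ω)^2 ∂μ = Real.exp (c/n) * ∫ ω, (S m ω)^2 ∂μ := by
    intro m hm
    have hSm2 : MemLp (S m) 2 μ := hmem m hm.le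
    have hΔ : MemLp (fun ω => S (m+1) ω - S m ω) 2 μ :=
      (memLp_two_iff_integrable_sq
        ((hmart.integrable (m+1)).aestronglyMeasurable.sub
          (hmart.integrable m).aestronglyMeasurable)).mpr (hΔint m hm)
    have hcross_int : Integrable (fun ω => S m ω * (S (m+1) ω - S m ω)) μ :=
      aux_mul_integrable hSm2 hΔ
    have hΔ0 : μ[fun ω => S (m+1) ω - S m ω | ℱ m] =ᵐ[μ] 0 := by
      show μ[S (m+1) - S m | ℱ m] =ᵐ[μ] 0
      have h1 := condExp_sub (m := ℱ m) (hmart.integrable (m+1)) (hmart.integrable m)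
      have h2 : μ[S (m+1)|ℱ m] =ᵐ[μ] S m := hmart.condExp_ae_eq (Nat.le_succ m)
      have h3 : μ[S m|ℱ m] =ᵐ[μ] S m := hmart.condExp_ae_eq le_rfl
      filter_upwards [h1, h2, h3] with ω e1 e2 e3
      simp only [Pi.sub_apply, Pi.zero_apply] at *
      rw [e1, e2, e3, sub_self]
    have hcross : ∫ ω, S m ω * (S (m+1) ω - S m ω) ∂μ = 0 := by
      have hpull : μ[(S m * fun ω => S (m+1) ω - S m ω) | ℱ m]
          =ᵐ[μ] S m * μ[fun ω => S (m+1) ω - S m ω | ℱ m] :=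
        condExp_mul_of_stronglyMeasurable_left (hmart.stronglyAdapted m) hcross_int
          ((hmart.integrable (m+1)).sub (hmart.integrable m))
      calc ∫ ω, S m ω * (S (m+1) ω - S m ω) ∂μ
          = ∫ ω, (μ[(S m * fun ω => S (m+1) ω - S m ω) | ℱ m]) ω ∂μ :=
            (integral_condExp (ℱ.le m)).symm
        _ = 0 := by
            rw [integral_eq_zero_of_ae]
            filter_upwards [hpull, hΔ0] with ω e1 e2
            simp [e1, e2]
    have hvar_int : ∫ ω, (S (m+1) ω - S m ω)^2 ∂μ
        = (Real.exp (c/n) - 1) * ∫ ω, (S m ω)^2 ∂μ := by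
      calc ∫ ω, (S (m+1) ω - S m ω)^2 ∂μ
          = ∫ ω, (μ[fun ω => (S (m+1) ω - S m ω)^2 | ℱ m]) ω ∂μ :=
            (integral_condExp (ℱ.le m)).symm
        _ = ∫ ω, (Real.exp (c / n) - 1) * (S m ω)^2 ∂μ := integral_congr_ae (hvar m hm)
        _ = (Real.exp (c/n) - 1) * ∫ ω, (S m ω)^2 ∂μ := integral_const_mul _ _
    have hexpand : (fun ω => (S (m+1) ω)^2)
        = fun ω => (S m ω)^2 + (2 * (S m ω * (S (m+1) ω - S m ω)) + (S (m+1) ω - S m ω)^2) := by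
      ext ω; ring
    have hint2 : Integrable (fun ω => 2 * (S m ω * (S (m+1) ω - S m ω))) μ :=
      hcross_int.const_mul 2
    have hint3 : Integrable
        (fun ω => 2 * (S m ω * (S (m+1) ω - S m ω)) + (S (m+1) ω - S m ω)^2) μ := by
      exact hint2.add (hΔint m hm)
    rw [hexpand, integral_add hSm2.integrable_sq hint3,
      integral_add hint2 (hΔint m hm), integral_const_mul, hcross, hvar_int]
    ring
  have hEsq : ∫ ω, (S n ω)^2 ∂μ = Real.exp c := by
    have key : ∀ m, m ≤ n → ∫ ω, (S m ω)^2 ∂μ = Real.exp (c * m / n) := by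
      intro m
      induction m with
      | zero =>
        intro _
        simp [hS0]
      | succ k ih =>
        intro hk
        have hkn : k < n := hk
        rw [hstep k hkn, ih hkn.le, ← Real.exp_add]
        congr 1
        have hn' : (n:ℝ) ≠ 0 := Nat.cast_ne_zero.mpr hn.ne'
        push_cast
        field_simp
        ring
    rw [key n le_rfl]
    congr 1
    have hn' : (n:ℝ) ≠ 0 := Nat.cast_ne_zero.mpr hn.ne'
    field_simp
  have hE1 : ∫ ω, S n ω ∂μ = 1 := by
    calc ∫ ω, S n ω ∂μ = ∫ ω, (μ[S n|ℱ 0]) ω ∂μ := (integral_condExp (ℱ.le 0)).symm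
      _ = ∫ ω, S 0 ω ∂μ := integral_congr_ae (hmart.condExp_ae_eq (Nat.zero_le n))
      _ = 1 := by simp [hS0]
  -- the continuous extension h of g
  set h : ℝ → ℝ := fun x => g (max x 0) with hhdef
  have hcont : Continuous h :=
    hglip.continuousOn.comp_continuous (continuous_id.max continuous_const)
      (fun x => le_max_right x 0)
  have hnn : ∀ x, 0 ≤ h x := fun x => hgnn _ (le_max_right x 0)
  have hbound : ∀ x, 0 ≤ x → h x ≤ L * x := by
    intro x hx
    have hd := hglip.dist_le_mul x hx (0 : ℝ) (Set.mem_Ici.mpr le_rfl)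
    rw [Real.dist_eq, Real.dist_eq, hg0, sub_zero, sub_zero] at hd
    have hmax : max x 0 = x := max_eq_left hx
    calc h x = g x := by rw [hhdef]; simp only [hmax]
      _ ≤ |g x| := le_abs_self _
      _ ≤ L * |x| := by rwa [Real.coe_toNNReal L hL.le] at hd
      _ = L * x := by rw [abs_of_nonneg hx]
  have haeg : ∀ᵐ ω ∂μ, g (S n ω) = h (S n ω) := by
    filter_upwards [hpos n] with ω hω
    rw [hhdef]; simp only [max_eq_left hω.le]
  -- measurability and integrability
  have hSmeas : AEStronglyMeasurable (S n) μ := (hmart.integrable n).aestronglyMeasurable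
  have hhS : AEStronglyMeasurable (fun ω => h (S n ω)) μ :=
    hcont.comp_aestronglyMeasurable hSmeas
  have hint_h : Integrable (fun ω => h (S n ω)) μ := by
    refine ((hmart.integrable n).const_mul L).mono hhS ?_
    filter_upwards [hpos n] with ω hω
    rw [Real.norm_eq_abs, Real.norm_eq_abs, abs_of_nonneg (hnn _)]
    exact (hbound _ hω.le).trans (le_abs_self _)
  have hint_min : Integrable (fun ω => min (h (S n ω)) M) μ := by
    refine (integrable_const M).mono
      ((hcont.min continuous_const).comp_aestronglyMeasurable hSmeas) ?_
    refine Filter.Eventually.of_forall fun ω => ?_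
    rw [Real.norm_eq_abs, Real.norm_eq_abs,
      abs_of_nonneg (le_min (hnn _) hM.le), abs_of_nonneg hM.le]
    exact min_le_right _ _
  -- the sqrt weight
  have hsqrtS : MemLp (fun ω => Real.sqrt (S n ω)) 2 μ := by
    refine (memLp_two_iff_integrable_sq
      (Real.continuous_sqrt.comp_aestronglyMeasurable hSmeas)).mpr ?_
    refine (hmart.integrable n).congr ?_
    filter_upwards [hpos n] with ω hω
    rw [Real.sq_sqrt hω.le]
  have hSn2 : MemLp (S n) 2 μ := hmem n le_rfl
  have hprod_int : Integrable (fun ω => Real.sqrt (S n ω) * S n ω) μ :=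
    aux_mul_integrable hsqrtS hSn2
  -- Cauchy-Schwarz
  have hCS : ∫ ω, Real.sqrt (S n ω) * S n ω ∂μ ≤ Real.exp (c/2) := by
    have hconj : (2:ℝ).HolderConjugate 2 := Real.HolderConjugate.two_two
    have h2 : (ENNReal.ofReal (2:ℝ)) = 2 := by norm_num
    have hcs := integral_mul_le_Lp_mul_Lq_of_nonneg hconj
      (f := fun ω => Real.sqrt (S n ω)) (g := S n)
      (Filter.Eventually.of_forall fun ω => Real.sqrt_nonneg _)
      ((hpos n).mono fun ω hω => hω.le) (h2 ▸ hsqrtS) (h2 ▸ hSn2)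
    have e1 : ∫ ω, Real.sqrt (S n ω) ^ (2:ℝ) ∂μ = 1 := by
      rw [← hE1]
      refine integral_congr_ae ?_
      filter_upwards [hpos n] with ω hω
      rw [Real.rpow_two, Real.sq_sqrt hω.le]
    have e2 : ∫ ω, S n ω ^ (2:ℝ) ∂μ = Real.exp c := by
      rw [← hEsq]
      refine integral_congr_ae (Filter.Eventually.of_forall fun ω => ?_)
      simp only [Real.rpow_two]
    rw [e1, e2] at hcs
    refine hcs.trans ?_
    rw [Real.one_rpow, one_mul, ← Real.exp_mul]
    rw [show c * ((1:ℝ)/2) = c/2 by ring]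
  -- pointwise bound
  have hptwise : ∀ᵐ ω ∂μ, h (S n ω) - min (h (S n ω)) M
      ≤ L ^ ((3:ℝ)/2) / Real.sqrt M * (Real.sqrt (S n ω) * S n ω) := by
    filter_upwards [hpos n] with ω hω
    set s := S n ω with hs
    have hsqM : 0 < Real.sqrt M := Real.sqrt_pos.mpr hM
    have hL32 : L ^ ((3:ℝ)/2) = L * Real.sqrt L := by
      rw [show (3:ℝ)/2 = 1 + 1/2 by norm_num, Real.rpow_add hL, Real.rpow_one,
        Real.sqrt_eq_rpow]
    rcases le_or_gt (h s) M with hcase | hcase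
    · rw [min_eq_left hcase, sub_self]
      exact mul_nonneg (div_nonneg (Real.rpow_nonneg hL.le _) (Real.sqrt_nonneg M))
        (mul_nonneg (Real.sqrt_nonneg _) hω.le)
    · rw [min_eq_right hcase.le]
      have h1 : M < L * s := lt_of_lt_of_le hcase (hbound s hω.le)
      have h2 : Real.sqrt M ≤ Real.sqrt (L * s) := Real.sqrt_le_sqrt h1.le
      have h3 : Real.sqrt (L * s) = Real.sqrt L * Real.sqrt s := Real.sqrt_mul hL.le s
      have hnn' : h s - M ≤ L * s := by linarith [hbound s hω.le]
      refine hnn'.trans ?_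
      rw [hL32, div_mul_eq_mul_div, le_div_iff₀ hsqM]
      calc L * s * Real.sqrt M ≤ L * s * (Real.sqrt L * Real.sqrt s) := by
            rw [← h3]
            exact mul_le_mul_of_nonneg_left h2 (mul_nonneg hL.le hω.le)
        _ = L * Real.sqrt L * (Real.sqrt s * s) := by ring
  -- assembling
  have hI1 : ∫ ω, g (S n ω) ∂μ = ∫ ω, h (S n ω) ∂μ := integral_congr_ae haeg
  have hI2 : ∫ ω, min (g (S n ω)) M ∂μ = ∫ ω, min (h (S n ω)) M ∂μ :=
    integral_congr_ae (haeg.mono fun ω e => by simp only [e])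
  rw [hI1, hI2]
  have hmono : ∫ ω, min (h (S n ω)) M ∂μ ≤ ∫ ω, h (S n ω) ∂μ :=
    integral_mono hint_min hint_h (fun ω => min_le_left _ _)
  rw [abs_of_nonneg (sub_nonneg.mpr hmono), ← integral_sub hint_h hint_min]
  calc ∫ ω, (h (S n ω) - min (h (S n ω)) M) ∂μ
      ≤ ∫ ω, L ^ ((3:ℝ)/2) / Real.sqrt M * (Real.sqrt (S n ω) * S n ω) ∂μ :=
        integral_mono_ae (hint_h.sub hint_min) (hprod_int.const_mul _) hptwise
    _ = L ^ ((3:ℝ)/2) / Real.sqrt M * ∫ ω, Real.sqrt (S n ω) * S n ω ∂μ :=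
        integral_const_mul _ _
    _ ≤ L ^ ((3:ℝ)/2) / Real.sqrt M * Real.exp (c/2) :=
        mul_le_mul_of_nonneg_left hCS
          (div_nonneg (Real.rpow_nonneg hL.le _) (Real.sqrt_nonneg M))
    _ = L ^ ((3:ℝ)/2) * Real.exp (c/2) / Real.sqrt M := by ring
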